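/- Let G_s be a scaled integer grid in ℝ^d with spacing α and let G_{s+1} = 2(G_s - O) + O + (α/2)v where O ∈ G_s and v ∈ {-1,+1}^d. Then for any x ∈ G_s and y ∈ G_{s+1} with x in the Voronoi cell of y (with respect to G_{s+1}, in the L∞ norm), the Voronoi cell of x with respect to G_s is contained in the Voronoi cell of y with respect to G_{s+1}. -/

import Mathlib

/-- For consecutive shifted grids `G_s = O + αℤ^d` and
`G_{s+1} = 2(G_s - O) + O + (α/2)v` with `v ∈ {±1}^d`, if `x ∈ G_s` lies in the
L∞-Voronoi cell of `y ∈ G_{s+1}`, then the whole Voronoi cell of `x` w.r.t. `G_s`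
is contained in the Voronoi cell of `y` w.r.t. `G_{s+1}`. -/
theorem stmt_1 (d : ℕ) (hd : 1 ≤ d) (α : ℝ) (hα : 0 < α)
    (O : Fin d → ℝ) (v : Fin d → ℝ) (hv : ∀ i, v i = 1 ∨ v i = -1) :
    let G : Set (Fin d → ℝ) := {x | ∃ z : Fin d → ℤ, ∀ i, x i = O i + α * (z i : ℝ)}
    let G' : Set (Fin d → ℝ) :=
      {x | ∃ z : Fin d → ℤ, ∀ i, x i = O i + 2 * α * (z i : ℝ) + α / 2 * v i}
    let Vor : Set (Fin d → ℝ) → (Fin d → ℝ) → Set (Fin d → ℝ) :=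
      fun S x => {p | ∀ y ∈ S, dist p x ≤ dist p y}
    ∀ x ∈ G, ∀ y ∈ G', x ∈ Vor G' y → Vor G x ⊆ Vor G' y := by
  intro G G' Vor x hx y hy hxy p hp
  obtain ⟨z, hz⟩ := hx
  obtain ⟨w, hw⟩ := hy
  have hα2 : (0:ℝ) ≤ α / 2 := by positivity
  -- Step A: each coordinate of x is within α/2 of y
  have hxyle : ∀ i, |x i - y i| ≤ α / 2 := by
    set m : Fin d → ℤ := fun i => if v i = 1 then z i / 2 else (z i + 1) / 2 with hm
    set ys : Fin d → ℝ := fun i => O i + 2 * α * (m i : ℝ) + α / 2 * v i with hys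
    have hysG : ys ∈ G' := ⟨m, fun _ => rfl⟩
    have h1 : dist x ys ≤ α / 2 := by
      rw [dist_pi_le_iff hα2]
      intro i
      rw [Real.dist_eq, hz i]
      rcases hv i with h | h
      · have hk : z i - 2 * (z i / 2) = 0 ∨ z i - 2 * (z i / 2) = 1 := by omega
        have hmi : m i = z i / 2 := by simp [hm, h]
        have heq : O i + α * (z i:ℝ) - ys i =
            α * (((z i - 2 * (z i / 2) : ℤ) : ℝ)) - α/2 := by
          simp only [hys, hmi, h]
          push_cast
          ring
        rcases hk with hk | hk <;> rw [heq, hk] <;> push_cast <;>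
          rw [abs_le] <;> constructor <;> linarith
      · have hk : z i - 2 * ((z i + 1) / 2) = 0 ∨ z i - 2 * ((z i + 1) / 2) = -1 := by omega
        have hmi : m i = (z i + 1) / 2 := by
          simp only [hm, h]
          norm_num
        have heq : O i + α * (z i:ℝ) - ys i =
            α * (((z i - 2 * ((z i + 1) / 2) : ℤ) : ℝ)) + α/2 := by
          simp only [hys, hmi, h]
          push_cast
          ring
        rcases hk with hk | hk <;> rw [heq, hk] <;> push_cast <;>
          rw [abs_le] <;> constructor <;> linarith
    have h2 : dist x y ≤ α / 2 := le_trans (hxy ys hysG) h1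
    intro i
    calc |x i - y i| = dist (x i) (y i) := (Real.dist_eq _ _).symm
      _ ≤ dist x y := dist_le_pi_dist x y i
      _ ≤ α / 2 := h2
  -- Step B: each coordinate of p is within α/2 of x
  have hpxle : ∀ i, |p i - x i| ≤ α / 2 := by
    set n : Fin d → ℤ := fun j => ⌊(p j - O j) / α + 1/2⌋ with hn
    set xs : Fin d → ℝ := fun j => O j + α * (n j : ℝ) with hxs
    have hxsG : xs ∈ G := ⟨n, fun _ => rfl⟩
    have h1 : dist p xs ≤ α / 2 := by
      rw [dist_pi_le_iff hα2]
      intro j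
      rw [Real.dist_eq]
      set t := (p j - O j) / α with ht
      have hfl : ((n j : ℝ)) ≤ t + 1/2 := Int.floor_le _
      have hfl2 : t + 1/2 < (n j : ℝ) + 1 := Int.lt_floor_add_one _
      have hpj : p j = O j + α * t := by
        rw [ht, mul_div_assoc', mul_div_cancel_left₀ _ hα.ne']; ring
      have : p j - xs j = α * (t - (n j : ℝ)) := by
        simp only [hxs, hpj]; ring
      rw [this, abs_mul, abs_of_pos hα]
      have : |t - (n j : ℝ)| ≤ 1/2 := by
        rw [abs_le]; constructor <;> linarith
      nlinarith
    have h2 : dist p x ≤ α / 2 := le_trans (hp xs hxsG) h1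
    intro i
    calc |p i - x i| = dist (p i) (x i) := (Real.dist_eq _ _).symm
      _ ≤ dist p x := dist_le_pi_dist p x i
      _ ≤ α / 2 := h2
  -- Step C: dist p y ≤ α
  have hpy : dist p y ≤ α := by
    rw [dist_pi_le_iff hα.le]
    intro i
    rw [Real.dist_eq]
    have := abs_sub_le (p i) (x i) (y i)
    linarith [hpxle i, hxyle i]
  -- Step D
  intro y' hy'
  obtain ⟨z', hz'⟩ := hy'
  by_cases hzw : z' = w
  · have : y' = y := by
      funext i; rw [hz' i, hw i, hzw]
    rw [this]
  · push_neg at hzw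
    have ⟨i, hi⟩ : ∃ i, z' i ≠ w i := by
      by_contra h
      push_neg at h
      exact hzw (funext h)
    have hsep : 2 * α ≤ |y i - y' i| := by
      have : y i - y' i = 2 * α * ((w i : ℝ) - (z' i : ℝ)) := by
        rw [hw i, hz' i]; ring
      rw [this, abs_mul, abs_of_pos (by linarith : (0:ℝ) < 2*α)]
      have h1 : (1:ℝ) ≤ |(w i : ℝ) - (z' i : ℝ)| := by
        have : ((w i - z' i : ℤ) : ℝ) = (w i : ℝ) - (z' i : ℝ) := by push_cast; ring
        rw [← this, ← Int.cast_abs]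
        have : 1 ≤ |w i - z' i| := Int.one_le_abs (by omega)
        exact_mod_cast this
      nlinarith
    have h1 : α ≤ |p i - y' i| := by
      have h2 := abs_sub_le (y i) (p i) (y' i)
      have h3 : |p i - y i| ≤ α := by
        have := abs_sub_le (p i) (x i) (y i)
        linarith [hpxle i, hxyle i]
      have h4 : |y i - p i| = |p i - y i| := abs_sub_comm _ _
      linarith
    calc dist p y ≤ α := hpy
      _ ≤ |p i - y' i| := h1
      _ = dist (p i) (y' i) := (Real.dist_eq _ _).symm
      _ ≤ dist p y' := dist_le_pi_dist p y' i
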